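/- Attacker α₂ can overflow tank T₂: assume additionally w ≥ 2v₁, w > 2v₂ and x₁(0) ≥ r₁. Under the constant attack i₂(k) = 0 for all k (with i₁ reporting the true level i₁(k) = x₁(k)), the level of tank T₂ grows without bound: for every 2n steps at least n of the commands are q₂, so x₂(2n) ≥ x₂(0) + n·(w − 2v₂); in particular for every M ∈ ℝ there exists k with x₂(k) ≥ M, and hence tank T₂ reaches its full level L. -/

import Mathlib

/-- One cycle of the two-tank water distribution system: given the sensed inputs
`i1, i2` and the current levels `(x1, x2)`, the controller outputs `q₁` if `i1 < r1`,
else `q₂` if `i2 < r2`, else `q₀`, and the levels evolve accordingly. -/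
noncomputable def tankStep (w v1 v2 r1 r2 i1 i2 x1 x2 : ℝ) : ℝ × ℝ :=
  if i1 < r1 then (x1 + w - v1, x2 - v2)
  else if i2 < r2 then (x1 - v1, x2 + w - v2)
  else (x1 - v1, x2 - v2)

/-- attacker `α₂` can overflow tank `T₂`: assume moreover `w ≥ 2v₁`,
`w > 2v₂` and `x₁(0) ≥ r₁`. Under the constant attack `i₂(k) = 0` (with `i₁` reporting
the true level), in every `2n` steps at least `n` of the commands are `q₂`, so
`x₂(2n) ≥ x₂(0) + n·(w − 2v₂)`; in particular `x₂` exceeds every bound `M` and in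
particular reaches the full level `L`. -/
theorem attacker2_overflows_T2
    (w v1 v2 r1 r2 L : ℝ)
    (hv1 : 0 < v1) (hv2 : 0 < v2) (hw : v1 + v2 ≤ w)
    (hr1 : 0 < r1) (hr1L : r1 < L) (hr2 : 0 < r2) (hr2L : r2 < L)
    (hw1 : 2 * v1 ≤ w) (hw2 : 2 * v2 < w)
    (x1 x2 : ℕ → ℝ) (hx10 : r1 ≤ x1 0)
    (h : ∀ k, (x1 (k + 1), x2 (k + 1)) = tankStep w v1 v2 r1 r2 (x1 k) 0 (x1 k) (x2 k)) :
    (∀ n : ℕ, n ≤ ((Finset.range (2 * n)).filter fun k => ¬ x1 k < r1).card) ∧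
    (∀ n : ℕ, x2 0 + n * (w - 2 * v2) ≤ x2 (2 * n)) ∧
    (∀ M : ℝ, ∃ k : ℕ, M ≤ x2 k) ∧
    (∃ k : ℕ, L ≤ x2 k) := by

  classical
  have hstep : ∀ k, (x1 (k+1) = if x1 k < r1 then x1 k + w - v1 else x1 k - v1) ∧
      (x2 (k+1) = if x1 k < r1 then x2 k - v2 else x2 k + w - v2) := by
    intro k
    have hk := h k
    simp only [tankStep, if_pos hr2] at hk
    by_cases h1 : x1 k < r1
    · simp only [if_pos h1] at hk ⊢
      exact ⟨congrArg Prod.fst hk, congrArg Prod.snd hk⟩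
    · simp only [if_neg h1] at hk ⊢
      exact ⟨congrArg Prod.fst hk, congrArg Prod.snd hk⟩
  have hinv : ∀ k, r1 - v1 ≤ x1 k := by
    intro k
    induction k with
    | zero => linarith
    | succ k ih =>
      have hs := (hstep k).1
      by_cases h1 : x1 k < r1
      · rw [hs, if_pos h1]; linarith
      · rw [hs, if_neg h1]; push_neg at h1; linarith
  have hC : ∀ k, x1 k < r1 → ¬ x1 (k+1) < r1 := by
    intro k h1
    have hs := (hstep k).1
    rw [hs, if_pos h1]
    have := hinv k
    push_neg
    linarith
  have hx2 : ∀ n : ℕ, x2 0 + n * (w - 2 * v2) ≤ x2 (2 * n) := by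
    intro n
    induction n with
    | zero => simp
    | succ n ih =>
      have e1 := (hstep (2*n)).2
      have e2 := (hstep (2*n+1)).2
      have h2n1 : 2*(n+1) = 2*n+1+1 := by ring
      rw [h2n1]
      push_cast
      have hr : ((n:ℝ)+1) * (w - 2*v2) = n * (w - 2*v2) + (w - 2*v2) := by ring
      rw [hr]
      by_cases h1 : x1 (2*n) < r1
      · have h2 := hC _ h1
        rw [if_pos h1] at e1
        rw [if_neg h2] at e2
        linarith
      · rw [if_neg h1] at e1
        by_cases h2 : x1 (2*n+1) < r1
        · rw [if_pos h2] at e2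
          linarith
        · rw [if_neg h2] at e2
          linarith
  have hcard : ∀ n : ℕ, n ≤ ((Finset.range (2 * n)).filter fun k => ¬ x1 k < r1).card := by
    intro n
    have := Finset.card_le_card_of_injOn
      (f := fun k => if x1 (2*k) < r1 then 2*k+1 else 2*k)
      (s := Finset.range n)
      (t := (Finset.range (2 * n)).filter fun k => ¬ x1 k < r1)
      (by
        intro k hk
        simp only [Finset.mem_coe, Finset.mem_range] at hk
        by_cases h1 : x1 (2*k) < r1
        · simp only [if_pos h1, Finset.mem_coe, Finset.mem_filter, Finset.mem_range]
          exact ⟨by omega, hC _ h1⟩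
        · simp only [if_neg h1, Finset.mem_coe, Finset.mem_filter, Finset.mem_range]
          exact ⟨by omega, h1⟩)
      (by
        intro a _ b _ hab
        simp only at hab
        split_ifs at hab <;> omega)
    simpa using this
  have hpos : 0 < w - 2 * v2 := by linarith
  have hM : ∀ M : ℝ, ∃ k : ℕ, M ≤ x2 k := by
    intro M
    obtain ⟨n, hn⟩ := exists_nat_ge ((M - x2 0) / (w - 2 * v2))
    refine ⟨2 * n, ?_⟩
    have h1 := (div_le_iff₀ hpos).mp hn
    have h2 := hx2 n
    linarith
  exact ⟨hcard, hx2, hM, hM L⟩
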